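/- (Flocking Lyapunov function for heavy-tailed kernels) Let D, δ : [0, ∞) → ℝ be nonnegative differentiable functions satisfying δ'(t) ≤ -K⟨D(t)⟩^{-θ} δ(t) and D'(t) ≤ δ(t), where K > 0, θ ∈ (0,1), and ⟨r⟩ := (1 + r²)^{1/2}. Then H(t) := K⟨D(t)⟩^{1-θ}/(1-θ) + δ(t) is non-increasing; consequently D(t) is uniformly bounded: ⟨D(t)⟩^{1-θ} ≤ ⟨D(0)⟩^{1-θ} + (1-θ)δ(0)/K for all t ≥ 0. -/

import Mathlib

/-- The "Japanese bracket" `⟨r⟩ = (1 + r²)^{1/2}`. -/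
noncomputable def jap (r : ℝ) : ℝ := Real.sqrt (1 + r ^ 2)

lemma one_le_jap (r : ℝ) : 1 ≤ jap r := by
  have : Real.sqrt 1 ≤ Real.sqrt (1 + r ^ 2) := Real.sqrt_le_sqrt (by nlinarith)
  simpa [jap] using this

lemma jap_pos (r : ℝ) : 0 < jap r := lt_of_lt_of_le one_pos (one_le_jap r)

lemma le_jap (r : ℝ) : r ≤ jap r := by
  have h : Real.sqrt (r ^ 2) ≤ Real.sqrt (1 + r ^ 2) := Real.sqrt_le_sqrt (by nlinarith)
  have h2 : Real.sqrt (r ^ 2) = |r| := Real.sqrt_sq_eq_abs r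
  calc r ≤ |r| := le_abs_self r
    _ ≤ jap r := by rw [← h2]; exact h

lemma jap_hasDerivAt {D : ℝ → ℝ} {t : ℝ} (hD : DifferentiableAt ℝ D t) :
    HasDerivAt (fun s => jap (D s)) (D t * deriv D t / jap (D t)) t := by
  have hu : HasDerivAt (fun s => 1 + D s ^ 2) ((2 : ℕ) * D t ^ (2 - 1) * deriv D t) t :=
    (hD.hasDerivAt.pow 2).const_add 1
  have hpos : (0 : ℝ) < 1 + D t ^ 2 := by positivity
  have hs : HasDerivAt Real.sqrt (1 / (2 * Real.sqrt (1 + D t ^ 2))) (1 + D t ^ 2) :=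
    Real.hasDerivAt_sqrt (ne_of_gt hpos)
  have := hs.comp t hu
  have hj : Real.sqrt (1 + D t ^ 2) = jap (D t) := rfl
  refine this.congr_deriv ?_
  rw [hj]
  have : jap (D t) ≠ 0 := ne_of_gt (jap_pos _)
  field_simp
  ring

/-- Flocking Lyapunov function for heavy-tailed kernels: if `δ' ≤ -K⟨D⟩^{-θ} δ` and
`D' ≤ δ`, with `K > 0`, `θ ∈ (0,1)`, then `H = K⟨D⟩^{1-θ}/(1-θ) + δ` is non-increasing,
and `⟨D(t)⟩^{1-θ} ≤ ⟨D(0)⟩^{1-θ} + (1-θ)δ(0)/K`. -/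
theorem flocking_lyapunov (K θ : ℝ) (hK : 0 < K) (hθ : θ ∈ Set.Ioo (0 : ℝ) 1)
    (D δ : ℝ → ℝ)
    (hD0 : ∀ t ≥ (0 : ℝ), 0 ≤ D t) (hδ0 : ∀ t ≥ (0 : ℝ), 0 ≤ δ t)
    (hDdiff : ∀ t ≥ (0 : ℝ), DifferentiableAt ℝ D t)
    (hδdiff : ∀ t ≥ (0 : ℝ), DifferentiableAt ℝ δ t)
    (hδ : ∀ t ≥ (0 : ℝ), deriv δ t ≤ -K * jap (D t) ^ (-θ) * δ t)
    (hD : ∀ t ≥ (0 : ℝ), deriv D t ≤ δ t) :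
    (∀ s t : ℝ, 0 ≤ s → s ≤ t →
        K * jap (D t) ^ (1 - θ) / (1 - θ) + δ t
          ≤ K * jap (D s) ^ (1 - θ) / (1 - θ) + δ s) ∧
    ∀ t ≥ (0 : ℝ), jap (D t) ^ (1 - θ) ≤ jap (D 0) ^ (1 - θ) + (1 - θ) * δ 0 / K := by
  obtain ⟨hθ0, hθ1⟩ := hθ
  have h1θ : (0 : ℝ) < 1 - θ := by linarith
  set H : ℝ → ℝ := fun t => K * jap (D t) ^ (1 - θ) / (1 - θ) + δ t with hHdef
  -- derivative of H at points t ≥ 0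
  have hHderiv : ∀ t ≥ (0 : ℝ), HasDerivAt H
      (K / (1 - θ) * ((D t * deriv D t / jap (D t)) * (1 - θ) * jap (D t) ^ (1 - θ - 1))
        + deriv δ t) t := by
    intro t ht
    have hj := jap_hasDerivAt (hDdiff t ht)
    have hr : HasDerivAt (fun s => jap (D s) ^ (1 - θ))
        ((D t * deriv D t / jap (D t)) * (1 - θ) * jap (D t) ^ (1 - θ - 1)) t :=
      hj.rpow_const (Or.inl (ne_of_gt (jap_pos _)))
    have := (hr.const_mul (K / (1 - θ))).add (hδdiff t ht).hasDerivAt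
    have hH : H = fun y => K / (1 - θ) * jap (D y) ^ (1 - θ) + δ y := by
      funext y; simp only [hHdef]; ring
    rw [hH]
    refine this.congr_deriv ?_
    ring
  have hderiv_nonpos : ∀ t ≥ (0 : ℝ), deriv H t ≤ 0 := by
    intro t ht
    rw [(hHderiv t ht).deriv]
    set g := jap (D t) with hg
    have hgpos : 0 < g := jap_pos _
    have hg1 : 1 ≤ g := one_le_jap _
    have hDle : D t ≤ g := le_jap _
    have hcle : D t / g ≤ 1 := (div_le_one hgpos).mpr hDle
    have hc0 : 0 ≤ D t / g := div_nonneg (hD0 t ht) hgpos.le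
    have hcd : D t / g * deriv D t ≤ δ t := by
      rcases le_or_gt (deriv D t) 0 with h | h
      · have : D t / g * deriv D t ≤ 0 := mul_nonpos_of_nonneg_of_nonpos hc0 h
        linarith [hδ0 t ht]
      · have h1 : D t / g * deriv D t ≤ 1 * deriv D t :=
          mul_le_mul_of_nonneg_right hcle h.le
        have := hD t ht
        linarith
    have hexp : g ^ (1 - θ - 1) = g ^ (-θ) := by norm_num
    rw [hexp]
    have hgpow : 0 < g ^ (-θ) := Real.rpow_pos_of_pos hgpos _
    have h2 : K / (1 - θ) * (D t * deriv D t / g * (1 - θ) * g ^ (-θ))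
        = K * g ^ (-θ) * (D t / g * deriv D t) := by
      field_simp
    rw [h2]
    have h3 : K * g ^ (-θ) * (D t / g * deriv D t) ≤ K * g ^ (-θ) * δ t :=
      mul_le_mul_of_nonneg_left hcd (by positivity)
    have h4 := hδ t ht
    linarith
  have hcont : ContinuousOn H (Set.Ici (0 : ℝ)) := fun t ht =>
    ((hHderiv t ht).differentiableAt.continuousAt).continuousWithinAt
  have hA : AntitoneOn H (Set.Ici (0 : ℝ)) := by
    apply antitoneOn_of_deriv_nonpos (convex_Ici 0) hcont
    · intro t ht
      rw [interior_Ici] at ht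
      exact ((hHderiv t ht.le).differentiableAt.differentiableWithinAt)
    · intro t ht
      rw [interior_Ici] at ht
      exact hderiv_nonpos t (le_of_lt ht)
  have part1 : ∀ s t : ℝ, 0 ≤ s → s ≤ t →
      K * jap (D t) ^ (1 - θ) / (1 - θ) + δ t
        ≤ K * jap (D s) ^ (1 - θ) / (1 - θ) + δ s := by
    intro s t hs hst
    exact hA hs (le_trans hs hst) hst
  refine ⟨part1, ?_⟩
  intro t ht
  have h := part1 0 t le_rfl ht
  have hδt := hδ0 t ht
  -- K * a / (1-θ) ≤ K * b / (1-θ) + δ 0  where a = jap(D t)^(1-θ), b = jap(D 0)^(1-θ)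
  have hkey : K * jap (D t) ^ (1 - θ) / (1 - θ)
      ≤ K * jap (D 0) ^ (1 - θ) / (1 - θ) + δ 0 := by linarith
  rw [div_add' _ _ _ (ne_of_gt h1θ), div_le_div_iff₀ h1θ h1θ] at hkey
  rw [← sub_nonneg]
  have hK' : K ≠ 0 := ne_of_gt hK
  have : jap (D 0) ^ (1 - θ) + (1 - θ) * δ 0 / K - jap (D t) ^ (1 - θ)
      = (K * jap (D 0) ^ (1 - θ) + δ 0 * (1 - θ) - K * jap (D t) ^ (1 - θ)) / K := by
    field_simp
  rw [this]
  apply div_nonneg _ hK.le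
  nlinarith [hkey]
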